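/- Let n ≥ 2 be an integer, θ ≥ 0, R > 0. Let m : (0,R) → ℝ be continuously differentiable and v : [0,R) → ℝ be continuously differentiable with |v(r)| ≤ θ for all r, and suppose that for all r ∈ (0,R): m'(r) ≤ −m(r)²/(n−1) − v'(r), and that r²·(m(r) − (n−1)/r) → 0 as r → 0⁺. Then for all r ∈ (0,R): m(r) ≤ (n−1)/r + 2θ. -/

import Mathlib

open Set

/-- ODE comparison content of the Laplacian comparison theorem (Theorem 2.1, `K = 0`):
if `m` is `C¹` on `(0,R)`, `v` is `C¹` on `[0,R)` with `|v| ≤ θ`, the Riccati inequality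
`m' ≤ −m²/(n−1) − v'` holds on `(0,R)`, and `r²(m(r) − (n−1)/r) → 0` as `r → 0⁺`, then
`m(r) ≤ (n−1)/r + 2θ` on `(0,R)`. -/
theorem laplacian_comparison_ODE_flat (n : ℕ) (hn : 2 ≤ n) (θ R : ℝ)
    (hθ : 0 ≤ θ) (hR : 0 < R)
    (m m' v v' : ℝ → ℝ)
    (hm : ∀ r ∈ Ioo (0 : ℝ) R, HasDerivAt m (m' r) r)
    (hm' : ContinuousOn m' (Ioo (0 : ℝ) R))
    (hv : ∀ r ∈ Ico (0 : ℝ) R, HasDerivWithinAt v (v' r) (Ico (0 : ℝ) R) r)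
    (hv' : ContinuousOn v' (Ico (0 : ℝ) R))
    (hvθ : ∀ r ∈ Ico (0 : ℝ) R, |v r| ≤ θ)
    (hriccati : ∀ r ∈ Ioo (0 : ℝ) R, m' r ≤ -(m r) ^ 2 / ((n : ℝ) - 1) - v' r)
    (hlim : Filter.Tendsto (fun r => r ^ 2 * (m r - ((n : ℝ) - 1) / r))
      (nhdsWithin 0 (Ioi (0 : ℝ))) (nhds 0)) :
    ∀ r ∈ Ioo (0 : ℝ) R, m r ≤ ((n : ℝ) - 1) / r + 2 * θ := by
  set a : ℝ := (n : ℝ) - 1 with ha_def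
  have ha : (1 : ℝ) ≤ a := by
    have : (2 : ℝ) ≤ (n : ℝ) := by exact_mod_cast hn
    simp [ha_def]; linarith
  have ha0 : (0 : ℝ) < a := by linarith
  set G : ℝ → ℝ := fun r => r ^ 2 * m r - a * r + r ^ 2 * v r - θ * r ^ 2 with hG_def
  -- derivative of G on (0,R)
  have hG : ∀ x ∈ Ioo (0 : ℝ) R, HasDerivAt G
      (2 * x * m x + x ^ 2 * m' x - a + (2 * x * v x + x ^ 2 * v' x) - θ * (2 * x)) x := by
    intro x hx
    have hvx : HasDerivAt v (v' x) x := by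
      have := hv x ⟨le_of_lt hx.1, hx.2⟩
      exact this.hasDerivAt (Ico_mem_nhds hx.1 hx.2)
    have h1 : HasDerivAt (fun r => r ^ 2) (2 * x) x := by
      simpa using hasDerivAt_pow 2 x
    have h2 : HasDerivAt (fun r => r ^ 2 * m r) (2 * x * m x + x ^ 2 * m' x) x :=
      h1.mul (hm x hx)
    have h3 : HasDerivAt (fun r => r ^ 2 * v r) (2 * x * v x + x ^ 2 * v' x) x :=
      h1.mul hvx
    have h4 : HasDerivAt (fun r => a * r) a x := by
      simpa using (hasDerivAt_id x).const_mul a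
    exact ((h2.sub h4).add h3).sub (h1.const_mul θ)
  -- the derivative is nonpositive
  have hG' : ∀ x ∈ Ioo (0 : ℝ) R,
      2 * x * m x + x ^ 2 * m' x - a + (2 * x * v x + x ^ 2 * v' x) - θ * (2 * x) ≤ 0 := by
    intro x hx
    have hx0 : (0 : ℝ) < x := hx.1
    have hric := hriccati x hx
    have hvb : v x ≤ θ := (abs_le.mp (hvθ x ⟨le_of_lt hx0, hx.2⟩)).2
    have key : x ^ 2 * (-(m x) ^ 2 / a) ≤ a - 2 * x * m x := by
      rw [div_eq_mul_inv, ← mul_assoc, ← div_eq_mul_inv, div_le_iff₀ ha0]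
      nlinarith [sq_nonneg (x * m x - a)]
    have h5 : x ^ 2 * m' x ≤ x ^ 2 * (-(m x) ^ 2 / a) - x ^ 2 * v' x := by
      have := mul_le_mul_of_nonneg_left hric (sq_nonneg x)
      nlinarith
    nlinarith [mul_le_mul_of_nonneg_left hvb (le_of_lt hx0)]
  intro r₀ hr₀
  have hr0 : (0 : ℝ) < r₀ := hr₀.1
  -- G is antitone on [ε, r₀] for every ε ∈ (0, r₀)
  have hmono : ∀ ε ∈ Ioo (0 : ℝ) r₀, G r₀ ≤ G ε := by
    intro ε hε
    have hsub : Icc ε r₀ ⊆ Ioo (0 : ℝ) R := fun x hx =>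
      ⟨lt_of_lt_of_le hε.1 hx.1, lt_of_le_of_lt hx.2 hr₀.2⟩
    have hsub' : Ioo ε r₀ ⊆ Ioo (0 : ℝ) R := fun x hx =>
      hsub ⟨le_of_lt hx.1, le_of_lt hx.2⟩
    have hcont : ContinuousOn G (Icc ε r₀) := fun x hx =>
      ((hG x (hsub hx)).continuousAt).continuousWithinAt
    have hdiff : DifferentiableOn ℝ G (interior (Icc ε r₀)) := by
      rw [interior_Icc]
      exact fun x hx => ((hG x (hsub' hx)).differentiableAt).differentiableWithinAt
    have hanti : AntitoneOn G (Icc ε r₀) := by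
      apply antitoneOn_of_deriv_nonpos (convex_Icc ε r₀) hcont hdiff
      intro x hx
      rw [interior_Icc] at hx
      rw [(hG x (hsub' hx)).deriv]
      exact hG' x (hsub' hx)
    exact hanti ⟨le_refl ε, le_of_lt hε.2⟩ ⟨le_of_lt hε.2, le_refl r₀⟩ (le_of_lt hε.2)
  -- G tends to 0 at 0⁺
  have hGlim : Filter.Tendsto G (nhdsWithin 0 (Ioi (0 : ℝ))) (nhds 0) := by
    have h1 : Filter.Tendsto (fun r : ℝ => r ^ 2 * v r) (nhdsWithin 0 (Ioi (0 : ℝ)))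
        (nhds 0) := by
      have htend : Filter.Tendsto (fun x : ℝ => x ^ 2 * θ) (nhdsWithin 0 (Ioi (0:ℝ)))
          (nhds 0) := by
        have : Filter.Tendsto (fun x : ℝ => x ^ 2 * θ) (nhds 0) (nhds ((0:ℝ) ^ 2 * θ)) :=
          ((continuous_pow 2).mul continuous_const).tendsto 0
        simpa using this.mono_left nhdsWithin_le_nhds
      have hbound : ∀ᶠ x in nhdsWithin 0 (Ioi (0:ℝ)),
          ‖x ^ 2 * v x‖ ≤ x ^ 2 * θ := by
        filter_upwards [Ioo_mem_nhdsGT_of_mem (⟨le_refl (0:ℝ), hR⟩ : (0:ℝ) ∈ Ico 0 R)]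
          with x hx
        have := hvθ x ⟨le_of_lt hx.1, hx.2⟩
        rw [Real.norm_eq_abs, abs_mul, abs_pow, abs_of_pos hx.1]
        exact mul_le_mul_of_nonneg_left this (by positivity)
      exact squeeze_zero_norm' hbound htend
    have h2 : Filter.Tendsto (fun r : ℝ => θ * r ^ 2) (nhdsWithin 0 (Ioi (0 : ℝ)))
        (nhds 0) := by
      have : Filter.Tendsto (fun x : ℝ => θ * x ^ 2) (nhds 0) (nhds (θ * 0 ^ 2)) :=
        (continuous_const.mul (continuous_pow 2)).tendsto 0
      simpa using this.mono_left nhdsWithin_le_nhds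
    have h3 := (hlim.add h1).sub h2
    simp only [add_zero, sub_zero] at h3
    apply h3.congr'
    filter_upwards [self_mem_nhdsWithin] with x hx
    have hx0 : x ≠ 0 := ne_of_gt hx
    simp only [hG_def]
    field_simp
  -- conclude G r₀ ≤ 0
  have hGle : G r₀ ≤ 0 := by
    refine ge_of_tendsto hGlim ?_
    filter_upwards [Ioo_mem_nhdsGT_of_mem (⟨le_refl (0:ℝ), hr0⟩ : (0:ℝ) ∈ Ico 0 r₀)]
      with ε hε
    exact hmono ε hε
  have hvb : -θ ≤ v r₀ := (abs_le.mp (hvθ r₀ ⟨le_of_lt hr0, hr₀.2⟩)).1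
  simp only [hG_def] at hGle
  rw [div_add' _ _ _ (ne_of_gt hr0), le_div_iff₀ hr0]
  nlinarith
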